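/- Let G be a group acting by homeomorphisms on a nonempty compact Hausdorff space X, and let ν be a regular Borel probability measure on X. Suppose the Poisson map P_ν is isometric, i.e. sup_{s ∈ G} |P_ν(f)(s)| = ‖f‖_∞ for every f ∈ C(X,ℝ). Then for every x ∈ X, the Dirac measure δ_x lies in the closure of the orbit {s·ν : s ∈ G} in the space of regular Borel probability measures on X with the topology of weak convergence (weak-* topology). -/

import Mathlib

open MeasureTheory

section Aux

variable {G X : Type*} [Group G] [TopologicalSpace X] [CompactSpace X]
    [MeasurableSpace X] [BorelSpace X] [MulAction G X] [ContinuousConstSMul G X]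

lemma aux_integrable (ν : Measure X) [IsFiniteMeasure ν] {f : X → ℝ} (hf : Continuous f)
    (s : G) : Integrable (fun y => f (s • y)) ν := by
  have hc : Continuous fun y : X => f (s • y) := hf.comp (continuous_const_smul s)
  exact hc.integrable_of_hasCompactSupport (HasCompactSupport.of_compactSpace _)

/-- Key analytic lemma: if the Poisson map is isometric, then for any finite family of
continuous functions and any `ε > 0` there is `s ∈ G` pushing `ν` close to `δ_x` against
these test functions. -/
lemma aux_key (ν : Measure X) [IsProbabilityMeasure ν]
    (hiso : ∀ f : C(X, ℝ), (⨆ s : G, |∫ x, f (s • x) ∂ν|) = ‖f‖)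
    (x : X) (F : Finset C(X, ℝ)) {ε : ℝ} (hε : 0 < ε) :
    ∃ s : G, ∀ f ∈ F, |(∫ y, f (s • y) ∂ν) - f x| < ε := by
  -- the "bump" function h = ∑ |f - f x|, nonnegative, vanishing at x
  set h : C(X, ℝ) := ∑ f ∈ F, |f - ContinuousMap.const X (f x)| with hh
  have h_apply : ∀ y, h y = ∑ f ∈ F, |f y - f x| := by
    intro y
    simp [hh]
  have h_nonneg : ∀ y, 0 ≤ h y := by
    intro y
    rw [h_apply]
    exact Finset.sum_nonneg fun f _ => abs_nonneg _
  have hx0 : h x = 0 := by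
    rw [h_apply]; simp
  set M : ℝ := ‖h‖ with hM
  have h_le : ∀ y, h y ≤ M := fun y =>
    (le_abs_self _).trans (by simpa [Real.norm_eq_abs] using h.norm_coe_le_norm y)
  -- the function g = M - h, with ‖g‖ = M, attained at x
  set g : C(X, ℝ) := ContinuousMap.const X M - h with hg
  have g_apply : ∀ y, g y = M - h y := fun y => rfl
  have g_nonneg : ∀ y, 0 ≤ g y := fun y => by
    rw [g_apply]; linarith [h_le y]
  have g_norm : ‖g‖ = M := by
    apply le_antisymm
    · refine (ContinuousMap.norm_le _ (norm_nonneg h)).2 fun y => ?_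
      rw [Real.norm_eq_abs, abs_of_nonneg (g_nonneg y), g_apply]
      linarith [h_nonneg y]
    · calc M = ‖g x‖ := by rw [Real.norm_eq_abs, g_apply, hx0, sub_zero,
          abs_of_nonneg (by linarith [h_nonneg x, h_le x])]
        _ ≤ ‖g‖ := g.norm_coe_le_norm x
  -- use the isometry assumption to find s
  have hsup : (⨆ s : G, |∫ y, g (s • y) ∂ν|) = M := by rw [hiso g, g_norm]
  have hM0 : 0 ≤ M := norm_nonneg h
  have hlt : M - ε / 2 < ⨆ s : G, |∫ y, g (s • y) ∂ν| := by
    rw [hsup]; linarith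
  obtain ⟨s, hs⟩ := exists_lt_of_lt_ciSup hlt
  refine ⟨s, fun f hf => ?_⟩
  -- the integral of g against s•ν is large, hence that of h is small
  have hint_g : Integrable (fun y => g (s • y)) ν := aux_integrable ν g.continuous s
  have hint_h : Integrable (fun y => h (s • y)) ν := aux_integrable ν h.continuous s
  have hIg_nonneg : 0 ≤ ∫ y, g (s • y) ∂ν := integral_nonneg fun y => g_nonneg _
  have hIg : M - ε / 2 < ∫ y, g (s • y) ∂ν := by
    rwa [abs_of_nonneg hIg_nonneg] at hs
  have hIh : (∫ y, h (s • y) ∂ν) < ε / 2 := by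
    have : (∫ y, g (s • y) ∂ν) = M - ∫ y, h (s • y) ∂ν := by
      simp only [g_apply]
      rw [integral_sub (integrable_const M) hint_h]
      simp
    linarith [hIg, this ▸ hIg]
  -- conclude via |∫ f(s•y) - f x| ≤ ∫ |f(s•y) - f x| ≤ ∫ h(s•y)
  have hint_f : Integrable (fun y => f (s • y)) ν := aux_integrable ν f.continuous s
  have hint_fa : Integrable (fun y => |f (s • y) - f x|) ν := by
    have : Continuous fun y : X => |f y - f x| := (f.continuous.sub continuous_const).abs
    exact aux_integrable ν this s
  have step1 : |(∫ y, f (s • y) ∂ν) - f x| ≤ ∫ y, |f (s • y) - f x| ∂ν := by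
    have : (∫ y, f (s • y) ∂ν) - f x = ∫ y, (f (s • y) - f x) ∂ν := by
      rw [integral_sub hint_f (integrable_const (f x))]
      simp
    rw [this]
    simpa [Real.norm_eq_abs] using
      norm_integral_le_integral_norm (μ := ν) fun y => f (s • y) - f x
  have step2 : (∫ y, |f (s • y) - f x| ∂ν) ≤ ∫ y, h (s • y) ∂ν := by
    refine integral_mono hint_fa hint_h fun y => ?_
    rw [h_apply]
    exact Finset.single_le_sum (fun f' _ => abs_nonneg (f' (s • y) - f' x)) hf
  linarith

end Aux

/-- If the Poisson map `P_ν : C(X,ℝ) → ℓ∞(G)` is isometric, then every Dirac measure `δ_x`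
lies in the weak-* closure of the `G`-orbit of `ν`. -/
theorem stmt_0 {G X : Type*} [Group G] [TopologicalSpace X] [CompactSpace X] [T2Space X]
    [Nonempty X] [MeasurableSpace X] [BorelSpace X]
    [MulAction G X] [ContinuousConstSMul G X]
    (ν : ProbabilityMeasure X) (hreg : (ν : Measure X).Regular)
    (hiso : ∀ f : C(X, ℝ), (⨆ s : G, |∫ x, f (s • x) ∂(ν : Measure X)|) = ‖f‖) :
    ∀ x : X, (⟨Measure.dirac x, inferInstance⟩ : ProbabilityMeasure X) ∈
      closure {μ : ProbabilityMeasure X | ∃ s : G,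
        μ = ν.map ((continuous_const_smul s).measurable.aemeasurable :
          AEMeasurable (fun y : X => s • y) (ν : Measure X))} := by
  classical
  intro x
  -- the orbit map
  set φ : G → ProbabilityMeasure X := fun s =>
    ν.map ((continuous_const_smul s).measurable.aemeasurable :
      AEMeasurable (fun y : X => s • y) (ν : Measure X)) with hφ
  have hφ_int : ∀ (s : G) (f : BoundedContinuousFunction X ℝ),
      (∫ y, f y ∂(φ s : Measure X)) = ∫ y, f (s • y) ∂(ν : Measure X) := by
    intro s f
    rw [hφ]
    simp only [ProbabilityMeasure.toMeasure_map]
    exact integral_map ((continuous_const_smul s).measurable.aemeasurable)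
      f.continuous.aestronglyMeasurable
  -- the index type of "neighborhood data" and the filter of admissible group elements
  set ι := Finset C(X, ℝ) × {e : ℝ // 0 < e} with hι
  set A : ι → Set G := fun p =>
    {s : G | ∀ f ∈ p.1, |(∫ y, f (s • y) ∂(ν : Measure X)) - f x| < p.2} with hA
  have hA_ne : ∀ p : ι, (A p).Nonempty := by
    rintro ⟨F, ε, hε⟩
    obtain ⟨s, hs⟩ := aux_key (G := G) (ν : Measure X) hiso x F hε
    exact ⟨s, hs⟩
  set l : Filter G := ⨅ p : ι, Filter.principal (A p) with hl
  have hdir : Directed (· ≥ ·) fun p : ι => Filter.principal (A p) := by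
    rintro ⟨F₁, ε₁, hε₁⟩ ⟨F₂, ε₂, hε₂⟩
    refine ⟨⟨F₁ ∪ F₂, min ε₁ ε₂, lt_min hε₁ hε₂⟩, ?_, ?_⟩ <;>
      refine Filter.principal_mono.2 fun s hs => fun f hf => ?_
    · exact lt_of_lt_of_le (hs f (Finset.mem_union_left _ hf)) (min_le_left _ _)
    · exact lt_of_lt_of_le (hs f (Finset.mem_union_right _ hf)) (min_le_right _ _)
  have hlne : l.NeBot := by
    refine Filter.iInf_neBot_of_directed hdir fun p => ?_
    exact Filter.principal_neBot_iff.2 (hA_ne p)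
  have hmem : ∀ p : ι, A p ∈ l := fun p => Filter.mem_iInf_of_mem p (Filter.mem_principal_self _)
  -- the orbit map tends to δ_x along l
  apply mem_closure_of_tendsto (f := φ) (b := l)
  case h => exact Filter.Eventually.of_forall fun s => ⟨s, rfl⟩
  refine ProbabilityMeasure.tendsto_iff_forall_integral_tendsto.2 ?_
  intro f
  simp only [ProbabilityMeasure.coe_mk]
  rw [integral_dirac]
  rw [Metric.tendsto_nhds]
  intro ε hε
  have := hmem ⟨{f.toContinuousMap}, ⟨ε, hε⟩⟩
  refine Filter.eventually_iff_exists_mem.2 ⟨_, this, fun s hs => ?_⟩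
  have hs' := hs f.toContinuousMap (Finset.mem_singleton_self _)
  rw [Real.dist_eq, hφ_int s f]
  exact hs'
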